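/- For every integer p ≥ 1 and every integer k with 0 ≤ k ≤ 2p there exists a constant c(p,k) > 0, depending only on p and k, with the following property: for every partition x_0 < x_1 < ⋯ < x_N of an interval [x_0,x_N] and every 2p-times continuously differentiable function g : [x_0,x_N] → ℝ, the piecewise Lidstone interpolant L^Δ g of g satisfies max_{1 ≤ n ≤ N} sup_{x ∈ (x_{n−1},x_n)} |(g − L^Δ g)^{(k)}(x)| ≤ c(p,k) · ‖g^{(2p)}‖_∞ · ‖Δ‖^{2p−k}, where ‖Δ‖ = max_{1 ≤ n ≤ N} (x_n − x_{n−1}) and ‖g^{(2p)}‖_∞ = sup_{x ∈ [x_0,x_N]} |g^{(2p)}(x)|. -/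

import Mathlib

open Set Filter

lemma iterWithin_congr_set' {f : ℝ → ℝ} {s t : Set ℝ} {y : ℝ} (h : s =ᶠ[nhds y] t) (n : ℕ) :
    iteratedDerivWithin n f s y = iteratedDerivWithin n f t y := by
  simp only [iteratedDerivWithin_eq_iteratedFDerivWithin, iteratedFDerivWithin_congr_set h n]

lemma iterWithin_mono' {g : ℝ → ℝ} {s S : Set ℝ} {nn : ℕ}
    (hg : ContDiffOn ℝ nn g S) (hS : UniqueDiffOn ℝ S) (hs : UniqueDiffOn ℝ s)
    (hsub : s ⊆ S) {m : ℕ} (hm : m ≤ nn) {y : ℝ} (hy : y ∈ s) :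
    iteratedDerivWithin m g s y = iteratedDerivWithin m g S y := by
  have h2 := ((hg.ftaylorSeriesWithin hS).mono hsub).eq_iteratedFDerivWithin_of_uniqueDiffOn
    (by exact_mod_cast hm) hs hy
  rw [iteratedDerivWithin_eq_iteratedFDerivWithin, iteratedDerivWithin_eq_iteratedFDerivWithin,
    ← h2]
  rfl

lemma lemA : ∀ (m : ℕ) (F : ℕ → ℝ → ℝ) (a b K : ℝ), a < b → 0 ≤ K →
    (∀ j < 2 * m, ∀ t ∈ Set.Icc a b, HasDerivWithinAt (F j) (F (j + 1) t) (Set.Icc a b) t) →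
    (∀ l < m, F (2 * l) a = 0 ∧ F (2 * l) b = 0) →
    (∀ t ∈ Set.Icc a b, |F (2 * m) t| ≤ K) →
    ∀ j ≤ 2 * m, ∀ t ∈ Set.Icc a b, |F j t| ≤ K * (b - a) ^ (2 * m - j) := by
  intro m
  induction m with
  | zero =>
    intro F a b K hab hK _ _ hbound j hj t ht
    obtain rfl : j = 0 := by omega
    simpa using hbound t ht
  | succ m IH =>
    intro F a b K hab hK hderiv hvanish hbound
    have hba : (0:ℝ) ≤ b - a := by linarith
    have IH2 := IH (fun j => F (j + 2)) a b K hab hK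
      (fun j hj t ht => hderiv (j + 2) (by omega) t ht)
      (fun l hl => by
        have h1 := hvanish (l + 1) (by omega)
        rw [show 2 * (l + 1) = 2 * l + 2 from by ring] at h1
        exact h1)
      (fun t ht => by
        have h1 := hbound t ht
        rw [show 2 * (m + 1) = 2 * m + 2 from by ring] at h1
        exact h1)
    have bound2 : ∀ t ∈ Set.Icc a b, |F 2 t| ≤ K * (b - a) ^ (2 * m) := by
      intro t ht
      simpa using IH2 0 (by omega) t ht
    have hF0a := (hvanish 0 (by omega)).1
    have hF0b := (hvanish 0 (by omega)).2
    have hF0c : ContinuousOn (F 0) (Set.Icc a b) :=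
      fun t ht => (hderiv 0 (by omega) t ht).continuousWithinAt
    obtain ⟨ξ, hξ, hξ0⟩ := exists_hasDerivAt_eq_zero hab hF0c
      (by rw [show F 0 a = 0 from hF0a, show F 0 b = 0 from hF0b])
      (fun t ht => (hderiv 0 (by omega) t (Set.Ioo_subset_Icc_self ht)).hasDerivAt
        (Icc_mem_nhds ht.1 ht.2))
    have bound1 : ∀ t ∈ Set.Icc a b, |F 1 t| ≤ K * (b - a) ^ (2 * m + 1) := by
      intro t ht
      have key := Convex.norm_image_sub_le_of_norm_hasDerivWithin_le
        (f := F 1) (f' := F 2) (s := Set.Icc a b) (C := K * (b - a) ^ (2 * m))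
        (fun s hs => hderiv 1 (by omega) s hs)
        (fun s hs => by simpa using bound2 s hs)
        (convex_Icc a b) (Set.Ioo_subset_Icc_self hξ) ht
      rw [Real.norm_eq_abs, Real.norm_eq_abs, hξ0, sub_zero] at key
      have h1 : |t - ξ| ≤ b - a := by
        rw [abs_le]
        constructor
        · linarith [ht.1, hξ.2]
        · linarith [ht.2, hξ.1]
      have hpow : (0:ℝ) ≤ K * (b - a) ^ (2 * m) := by positivity
      calc |F 1 t| ≤ K * (b - a) ^ (2 * m) * |t - ξ| := key
        _ ≤ K * (b - a) ^ (2 * m) * (b - a) := by nlinarith [abs_nonneg (t - ξ)]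
        _ = K * (b - a) ^ (2 * m + 1) := by ring
    have bound0 : ∀ t ∈ Set.Icc a b, |F 0 t| ≤ K * (b - a) ^ (2 * m + 2) := by
      intro t ht
      have key := Convex.norm_image_sub_le_of_norm_hasDerivWithin_le
        (f := F 0) (f' := F 1) (s := Set.Icc a b) (C := K * (b - a) ^ (2 * m + 1))
        (fun s hs => hderiv 0 (by omega) s hs)
        (fun s hs => bound1 s hs)
        (convex_Icc a b) (Set.left_mem_Icc.2 hab.le) ht
      rw [Real.norm_eq_abs, Real.norm_eq_abs] at key
      have hF0a' : F 0 a = 0 := hF0a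
      rw [hF0a', sub_zero] at key
      have h1 : |t - a| ≤ b - a := by
        rw [abs_le]
        constructor
        · linarith [ht.1]
        · linarith [ht.2]
      have hpow : (0:ℝ) ≤ K * (b - a) ^ (2 * m + 1) := by positivity
      calc |F 0 t| ≤ K * (b - a) ^ (2 * m + 1) * |t - a| := key
        _ ≤ K * (b - a) ^ (2 * m + 1) * (b - a) := by nlinarith [abs_nonneg (t - a)]
        _ = K * (b - a) ^ (2 * m + 2) := by ring
    intro j hj t ht
    rcases j with _ | _ | j
    · rw [show 2 * (m + 1) - 0 = 2 * m + 2 from by omega]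
      exact bound0 t ht
    · rw [show 2 * (m + 1) - 1 = 2 * m + 1 from by omega]
      exact bound1 t ht
    · rw [show 2 * (m + 1) - (j + 2) = 2 * m - j from by omega]
      exact IH2 j (by omega) t ht


/-- The defining property of the sequence of Lidstone polynomial functions. -/
def LidstoneProp (Λ : ℕ → ℝ → ℝ) : Prop :=
  (∀ l : ℕ, ∃ P : Polynomial ℝ, ∀ x : ℝ, Λ l x = P.eval x) ∧
  (∀ x : ℝ, Λ 0 x = x) ∧
  (∀ l : ℕ, (∀ x : ℝ, iteratedDeriv 2 (Λ (l + 1)) x = Λ l x) ∧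
    Λ (l + 1) 0 = 0 ∧ Λ (l + 1) 1 = 0)

/-- For every `p ≥ 1` and `0 ≤ k ≤ 2p` there is a constant `c = c(p,k) > 0` such that
for every partition `x 0 < x 1 < ⋯ < x N` and every `2p`-times continuously
differentiable `g` on `[x 0, x N]`, the piecewise Lidstone interpolant `Lg` of `g`
satisfies `|(g - Lg)^(k)| ≤ c ‖g^(2p)‖_∞ ‖Δ‖^(2p-k)` on every open subinterval,
where `M = ‖g^(2p)‖_∞` and `δ = ‖Δ‖` is the mesh of the partition. -/
theorem piecewise_lidstone_interpolation_error (Λ : ℕ → ℝ → ℝ) (hΛ : LidstoneProp Λ)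
    (p : ℕ) (hp : 1 ≤ p) (k : ℕ) (hk : k ≤ 2 * p) :
    ∃ c : ℝ, 0 < c ∧
      ∀ (N : ℕ), 1 ≤ N → ∀ (x : ℕ → ℝ), (∀ n < N, x n < x (n + 1)) →
      ∀ g Lg : ℝ → ℝ,
        ContDiffOn ℝ (2 * p) g (Set.Icc (x 0) (x N)) →
        (∀ n, 1 ≤ n → n ≤ N → ∀ t ∈ Set.Icc (x (n - 1)) (x n),
          Lg t = ∑ l ∈ Finset.range (p + 1),
            (iteratedDerivWithin (2 * l) g (Set.Icc (x 0) (x N)) (x (n - 1)) *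
                Λ l ((x n - t) / (x n - x (n - 1))) +
              iteratedDerivWithin (2 * l) g (Set.Icc (x 0) (x N)) (x n) *
                Λ l ((t - x (n - 1)) / (x n - x (n - 1)))) *
              (x n - x (n - 1)) ^ (2 * l)) →
        ∀ M δ : ℝ,
          IsLUB ((fun t => |iteratedDerivWithin (2 * p) g (Set.Icc (x 0) (x N)) t|) ''
            Set.Icc (x 0) (x N)) M →
          IsGreatest {d : ℝ | ∃ n, 1 ≤ n ∧ n ≤ N ∧ d = x n - x (n - 1)} δ →
          ∀ n, 1 ≤ n → n ≤ N → ∀ t ∈ Set.Ioo (x (n - 1)) (x n),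
            |iteratedDerivWithin k (fun s => g s - Lg s) (Set.Icc (x 0) (x N)) t| ≤
              c * M * δ ^ (2 * p - k) := by
  classical
  choose P hP using hΛ.1
  have hΛeq : ∀ l, Λ l = fun y => (P l).eval y := fun l => funext (hP l)
  set Pd : ℕ → Polynomial ℝ := fun l => (P l).derivative with hPddef
  have hΛd : ∀ (l : ℕ) (y : ℝ), HasDerivAt (Λ l) ((Pd l).eval y) y := by
    intro l y
    rw [hΛeq l]
    exact Polynomial.hasDerivAt _ y
  set W : ℕ → ℝ → ℝ := fun l => Nat.casesOn l (fun _ => (0:ℝ)) (fun l' => Λ l') with hWdef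
  have hW0 : ∀ y : ℝ, W 0 y = 0 := fun _ => rfl
  have hWs : ∀ l : ℕ, W (l + 1) = Λ l := fun _ => rfl
  have hWd : ∀ (l : ℕ) (y : ℝ), HasDerivAt (fun z => (Pd l).eval z) (W l y) y := by
    intro l y
    cases l with
    | zero =>
      have hd0 : ∀ z : ℝ, (Pd 0).eval z = 1 := by
        intro z
        have h1 : deriv (Λ 0) z = (Pd 0).eval z := by rw [hΛeq 0]; exact Polynomial.deriv _
        have h2 : Λ 0 = fun x : ℝ => x := funext hΛ.2.1
        rw [← h1, h2]
        simp
      have hc : (fun z : ℝ => (Pd 0).eval z) = fun _ : ℝ => (1:ℝ) := funext hd0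
      rw [hW0, hc]
      exact hasDerivAt_const y 1
    | succ l =>
      have h1 : HasDerivAt (fun z : ℝ => (Pd (l + 1)).eval z)
          ((Pd (l + 1)).derivative.eval y) y := Polynomial.hasDerivAt _ y
      have h2 : (Pd (l + 1)).derivative.eval y = Λ l y := by
        have h3 := (hΛ.2.2 l).1 y
        rw [show (2:ℕ) = 1 + 1 from rfl, iteratedDeriv_succ, iteratedDeriv_one] at h3
        have h4 : deriv (Λ (l + 1)) = fun z => (Pd (l + 1)).eval z := by
          funext z
          rw [hΛeq (l + 1)]
          exact Polynomial.deriv _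
        rw [h4] at h3
        rw [← h3]
        exact (Polynomial.deriv _).symm
      rw [hWs]
      rwa [h2] at h1
  refine ⟨2, by norm_num, ?_⟩
  intro N hN x hmono g Lg hg hLg M δ hM hδ n hn1 hnN t ht
  -- monotonicity of the partition
  have xle : ∀ i j : ℕ, i ≤ j → j ≤ N → x i ≤ x j := by
    intro i j hij hjN
    induction j with
    | zero =>
      obtain rfl : i = 0 := by omega
      exact le_rfl
    | succ j ih =>
      rcases Nat.lt_or_ge i (j + 1) with hc | hc
      · exact le_trans (ih (by omega) (by omega)) (hmono j (by omega)).le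
      · obtain rfl : i = j + 1 := by omega
        exact le_rfl
  have hLgn := hLg n hn1 hnN
  set S := Set.Icc (x 0) (x N) with hSdef
  set a := x (n - 1) with hadef
  set b := x n with hbdef
  set dh := b - a with hdhdef
  have hab : a < b := by
    rw [hadef, hbdef]
    have h1 := hmono (n - 1) (by omega)
    rwa [show n - 1 + 1 = n from by omega] at h1
  have hdh : 0 < dh := by rw [hdhdef]; linarith
  have hx0a : x 0 ≤ a := by rw [hadef]; exact xle 0 (n - 1) (by omega) (by omega)
  have hbxN : b ≤ x N := by rw [hbdef]; exact xle n N hnN le_rfl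
  have hx0N : x 0 < x N := lt_of_le_of_lt hx0a (lt_of_lt_of_le hab hbxN)
  have hsub : Set.Icc a b ⊆ S := by rw [hSdef]; exact Set.Icc_subset_Icc hx0a hbxN
  have hudS : UniqueDiffOn ℝ S := by rw [hSdef]; exact uniqueDiffOn_Icc hx0N
  have huds : UniqueDiffOn ℝ (Set.Icc a b) := uniqueDiffOn_Icc hab
  have hmem_a : a ∈ Set.Icc a b := Set.left_mem_Icc.2 hab.le
  have hmem_b : b ∈ Set.Icc a b := Set.right_mem_Icc.2 hab.le
  have hg2 : ContDiffOn ℝ ((2 * p : ℕ) : WithTop ℕ∞) g S := by exact_mod_cast hg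
  have hM0 : 0 ≤ M :=
    le_trans (abs_nonneg _) (hM.1 ⟨x 0, by rw [hSdef]; exact ⟨le_rfl, hx0N.le⟩, rfl⟩)
  have hMb : ∀ s ∈ S, |iteratedDerivWithin (2 * p) g S s| ≤ M := fun s hs => hM.1 ⟨s, hs, rfl⟩
  have hδb : dh ≤ δ := hδ.2 ⟨n, hn1, hnN, by rw [hdhdef, hbdef, hadef]⟩
  -- the local interpolant and its derivatives
  set Qf : ℕ → ℝ → ℝ := fun j s => ∑ l ∈ Finset.range (p + 1 - j),
    (iteratedDerivWithin (2 * (l + j)) g S a * Λ l ((b - s) / dh) +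
     iteratedDerivWithin (2 * (l + j)) g S b * Λ l ((s - a) / dh)) * dh ^ (2 * l) with hQfdef
  set Rf : ℕ → ℝ → ℝ := fun j s => (∑ l ∈ Finset.range (p + 1 - j),
    (-(iteratedDerivWithin (2 * (l + j)) g S a) * (Pd l).eval ((b - s) / dh) +
     iteratedDerivWithin (2 * (l + j)) g S b * (Pd l).eval ((s - a) / dh)) * dh ^ (2 * l)) / dh
    with hRfdef
  have hu : ∀ s : ℝ, HasDerivAt (fun y : ℝ => (b - y) / dh) (-1 / dh) s := fun s =>
    ((hasDerivAt_id s).const_sub b).div_const dh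
  have hv : ∀ s : ℝ, HasDerivAt (fun y : ℝ => (y - a) / dh) (1 / dh) s := fun s =>
    ((hasDerivAt_id s).sub_const a).div_const dh
  have hQR : ∀ (j : ℕ) (s : ℝ), HasDerivAt (Qf j) (Rf j s) s := by
    intro j s
    have hsum : HasDerivAt (fun y : ℝ => ∑ l ∈ Finset.range (p + 1 - j),
          (iteratedDerivWithin (2 * (l + j)) g S a * Λ l ((b - y) / dh) +
           iteratedDerivWithin (2 * (l + j)) g S b * Λ l ((y - a) / dh)) * dh ^ (2 * l))
        (∑ l ∈ Finset.range (p + 1 - j),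
          (iteratedDerivWithin (2 * (l + j)) g S a * ((Pd l).eval ((b - s) / dh) * (-1 / dh)) +
           iteratedDerivWithin (2 * (l + j)) g S b * ((Pd l).eval ((s - a) / dh) * (1 / dh))) *
            dh ^ (2 * l)) s := by
      apply HasDerivAt.fun_sum
      intro l _
      have h1 : HasDerivAt (fun y : ℝ => Λ l ((b - y) / dh))
          ((Pd l).eval ((b - s) / dh) * (-1 / dh)) s := by
        have hcomp := (hΛd l ((b - s) / dh)).comp s (hu s)
        simpa [Function.comp_def] using hcomp
      have h2 : HasDerivAt (fun y : ℝ => Λ l ((y - a) / dh))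
          ((Pd l).eval ((s - a) / dh) * (1 / dh)) s := by
        have hcomp := (hΛd l ((s - a) / dh)).comp s (hv s)
        simpa [Function.comp_def] using hcomp
      exact ((h1.const_mul _).add (h2.const_mul _)).mul_const _
    have heq : (∑ l ∈ Finset.range (p + 1 - j),
          (iteratedDerivWithin (2 * (l + j)) g S a * ((Pd l).eval ((b - s) / dh) * (-1 / dh)) +
           iteratedDerivWithin (2 * (l + j)) g S b * ((Pd l).eval ((s - a) / dh) * (1 / dh))) *
            dh ^ (2 * l)) = Rf j s := by
      simp only [hRfdef]
      rw [Finset.sum_div]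
      exact Finset.sum_congr rfl fun l _ => by ring
    exact heq ▸ hsum
  have hRQ : ∀ j, j < p → ∀ s : ℝ, HasDerivAt (Rf j) (Qf (j + 1) s) s := by
    intro j hj s
    have hsum : HasDerivAt (fun y : ℝ => ∑ l ∈ Finset.range (p + 1 - j),
          (-(iteratedDerivWithin (2 * (l + j)) g S a) * (Pd l).eval ((b - y) / dh) +
           iteratedDerivWithin (2 * (l + j)) g S b * (Pd l).eval ((y - a) / dh)) * dh ^ (2 * l))
        (∑ l ∈ Finset.range (p + 1 - j),
          (-(iteratedDerivWithin (2 * (l + j)) g S a) * (W l ((b - s) / dh) * (-1 / dh)) +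
           iteratedDerivWithin (2 * (l + j)) g S b * (W l ((s - a) / dh) * (1 / dh))) *
            dh ^ (2 * l)) s := by
      apply HasDerivAt.fun_sum
      intro l _
      have h1 : HasDerivAt (fun y : ℝ => (Pd l).eval ((b - y) / dh))
          (W l ((b - s) / dh) * (-1 / dh)) s := by
        have hcomp := (hWd l ((b - s) / dh)).comp s (hu s)
        simpa [Function.comp_def] using hcomp
      have h2 : HasDerivAt (fun y : ℝ => (Pd l).eval ((y - a) / dh))
          (W l ((s - a) / dh) * (1 / dh)) s := by
        have hcomp := (hWd l ((s - a) / dh)).comp s (hv s)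
        simpa [Function.comp_def] using hcomp
      exact ((h1.const_mul _).add (h2.const_mul _)).mul_const _
    have hs2 := hsum.div_const dh
    have heq : (∑ l ∈ Finset.range (p + 1 - j),
          (-(iteratedDerivWithin (2 * (l + j)) g S a) * (W l ((b - s) / dh) * (-1 / dh)) +
           iteratedDerivWithin (2 * (l + j)) g S b * (W l ((s - a) / dh) * (1 / dh))) *
            dh ^ (2 * l)) / dh = Qf (j + 1) s := by
      rw [show p + 1 - j = (p - j) + 1 from by omega, Finset.sum_range_succ']
      simp only [hW0, hWs, mul_zero, zero_mul, neg_zero, add_zero, zero_add]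
      simp only [hQfdef]
      rw [show p + 1 - (j + 1) = p - j from by omega, Finset.sum_div]
      apply Finset.sum_congr rfl
      intro l _
      rw [show l + 1 + j = l + (j + 1) from by omega,
        show 2 * (l + 1) = 2 * l + 1 + 1 from by ring, pow_succ, pow_succ]
      field_simp
    exact heq ▸ hs2
  set G : ℕ → ℝ → ℝ := fun j => if j % 2 = 0 then Qf (j / 2) else Rf (j / 2) with hGdef
  have hGeven : ∀ r : ℕ, G (2 * r) = Qf r := by
    intro r
    simp only [hGdef]
    rw [if_pos (by omega : 2 * r % 2 = 0), show 2 * r / 2 = r from by omega]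
  have hGodd : ∀ r : ℕ, G (2 * r + 1) = Rf r := by
    intro r
    simp only [hGdef]
    rw [if_neg (by omega : ¬(2 * r + 1) % 2 = 0), show (2 * r + 1) / 2 = r from by omega]
  have hGd : ∀ j, j < 2 * p → ∀ y : ℝ, HasDerivAt (G j) (G (j + 1) y) y := by
    intro j hj y
    rcases Nat.even_or_odd j with ⟨r, hr⟩ | ⟨r, hr⟩
    · obtain rfl : j = 2 * r := by omega
      rw [hGeven r, hGodd r]
      exact hQR r y
    · obtain rfl : j = 2 * r + 1 := by omega
      rw [hGodd r, show 2 * r + 1 + 1 = 2 * (r + 1) from by ring, hGeven (r + 1)]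
      exact hRQ r (by omega) y
  set F : ℕ → ℝ → ℝ := fun j s => iteratedDerivWithin j g (Set.Icc a b) s - G j s with hFdef
  have hgd : ∀ j, j < 2 * p → ∀ s ∈ Set.Icc a b,
      HasDerivWithinAt (iteratedDerivWithin j g (Set.Icc a b))
        (iteratedDerivWithin (j + 1) g (Set.Icc a b) s) (Set.Icc a b) s := by
    intro j hj s hs
    have hd := ((hg.mono hsub).differentiableOn_iteratedDerivWithin
      (by exact_mod_cast hj) huds) s hs
    have h1 := hd.hasDerivWithinAt
    rwa [← iteratedDerivWithin_succ] at h1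
  have hFd : ∀ j, j < 2 * p → ∀ s ∈ Set.Icc a b,
      HasDerivWithinAt (F j) (F (j + 1) s) (Set.Icc a b) s := by
    intro j hj s hs
    simp only [hFdef]
    exact (hgd j hj s hs).sub ((hGd j hj s).hasDerivWithinAt)
  -- endpoint values of Qf
  have hone : (b - a) / dh = 1 := by rw [← hdhdef]; exact div_self hdh.ne'
  have hQa : ∀ l, l ≤ p → Qf l a = iteratedDerivWithin (2 * l) g S a := by
    intro l hl
    simp only [hQfdef]
    rw [show p + 1 - l = (p - l) + 1 from by omega, Finset.sum_range_succ']
    have e2 : (a - a) / dh = 0 := by rw [sub_self, zero_div]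
    simp only [hone, e2]
    rw [Finset.sum_eq_zero (fun i _ => by
      rw [(hΛ.2.2 i).2.2, (hΛ.2.2 i).2.1]; ring)]
    rw [hΛ.2.1 1, hΛ.2.1 0]
    simp
  have hQb : ∀ l, l ≤ p → Qf l b = iteratedDerivWithin (2 * l) g S b := by
    intro l hl
    simp only [hQfdef]
    rw [show p + 1 - l = (p - l) + 1 from by omega, Finset.sum_range_succ']
    have e2 : (b - b) / dh = 0 := by rw [sub_self, zero_div]
    simp only [hone, e2]
    rw [Finset.sum_eq_zero (fun i _ => by
      rw [(hΛ.2.2 i).2.2, (hΛ.2.2 i).2.1]; ring)]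
    rw [hΛ.2.1 1, hΛ.2.1 0]
    simp
  have hvan : ∀ l, l < p → F (2 * l) a = 0 ∧ F (2 * l) b = 0 := by
    intro l hl
    have hma := iterWithin_mono' hg2 hudS huds hsub (m := 2 * l) (by omega) hmem_a
    have hmb := iterWithin_mono' hg2 hudS huds hsub (m := 2 * l) (by omega) hmem_b
    constructor
    · simp only [hFdef]
      rw [hGeven l, hQa l hl.le, hma, sub_self]
    · simp only [hFdef]
      rw [hGeven l, hQb l hl.le, hmb, sub_self]
  have hbound : ∀ s ∈ Set.Icc a b, |F (2 * p) s| ≤ 2 * M := by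
    intro s hs
    have hms := iterWithin_mono' hg2 hudS huds hsub (m := 2 * p) le_rfl hs
    have hQp : Qf p s = iteratedDerivWithin (2 * p) g S a * ((b - s) / dh) +
        iteratedDerivWithin (2 * p) g S b * ((s - a) / dh) := by
      simp only [hQfdef]
      rw [show p + 1 - p = 1 from by omega, Finset.sum_range_one]
      simp [hΛ.2.1]
    have hAp : |iteratedDerivWithin (2 * p) g S a| ≤ M := hMb a (hsub hmem_a)
    have hBp : |iteratedDerivWithin (2 * p) g S b| ≤ M := hMb b (hsub hmem_b)
    have hu0 : 0 ≤ (b - s) / dh := div_nonneg (by linarith [hs.2]) hdh.le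
    have hv0 : 0 ≤ (s - a) / dh := div_nonneg (by linarith [hs.1]) hdh.le
    have huv : (b - s) / dh + (s - a) / dh = 1 := by
      rw [← add_div, show b - s + (s - a) = b - a from by ring, ← hdhdef]
      exact div_self hdh.ne'
    have hQpb : |Qf p s| ≤ M := by
      rw [hQp]
      calc |iteratedDerivWithin (2 * p) g S a * ((b - s) / dh) +
            iteratedDerivWithin (2 * p) g S b * ((s - a) / dh)|
          ≤ |iteratedDerivWithin (2 * p) g S a * ((b - s) / dh)| +
            |iteratedDerivWithin (2 * p) g S b * ((s - a) / dh)| := abs_add_le _ _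
        _ = |iteratedDerivWithin (2 * p) g S a| * ((b - s) / dh) +
            |iteratedDerivWithin (2 * p) g S b| * ((s - a) / dh) := by
            rw [abs_mul, abs_mul, abs_of_nonneg hu0, abs_of_nonneg hv0]
        _ ≤ M * ((b - s) / dh) + M * ((s - a) / dh) :=
            add_le_add (mul_le_mul_of_nonneg_right hAp hu0)
              (mul_le_mul_of_nonneg_right hBp hv0)
        _ = M := by rw [← mul_add, huv, mul_one]
    have hF2p : F (2 * p) s = iteratedDerivWithin (2 * p) g (Set.Icc a b) s - Qf p s := by
      simp only [hFdef]
      rw [hGeven p]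
    rw [hF2p]
    have habs : |iteratedDerivWithin (2 * p) g (Set.Icc a b) s - Qf p s| ≤
        |iteratedDerivWithin (2 * p) g (Set.Icc a b) s| + |Qf p s| := by
      have h := abs_add_le (iteratedDerivWithin (2 * p) g (Set.Icc a b) s) (-(Qf p s))
      rwa [abs_neg, ← sub_eq_add_neg] at h
    have hgs : |iteratedDerivWithin (2 * p) g (Set.Icc a b) s| ≤ M := by
      rw [hms]; exact hMb s (hsub hs)
    linarith
  have key := lemA p F a b (2 * M) hab (by linarith) hFd hvan hbound
  -- transfer to the statement's derivative
  have hset : S =ᶠ[nhds t] Set.Icc a b := by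
    rw [Filter.eventuallyEq_set]
    filter_upwards [Ioo_mem_nhds ht.1 ht.2] with s hs
    exact iff_of_true (hsub (Set.Ioo_subset_Icc_self hs)) (Set.Ioo_subset_Icc_self hs)
  have e1 : iteratedDerivWithin k (fun s => g s - Lg s) S t =
      iteratedDerivWithin k (fun s => g s - Lg s) (Set.Icc a b) t :=
    iterWithin_congr_set' hset k
  have heqon : Set.EqOn (fun s => g s - Lg s) (fun s => g s - Qf 0 s) (Set.Icc a b) := by
    intro s hs
    simp only []
    rw [hLgn s hs]
    congr 1
  have e2 : iteratedDerivWithin k (fun s => g s - Lg s) (Set.Icc a b) t =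
      iteratedDerivWithin k (fun s => g s - Qf 0 s) (Set.Icc a b) t :=
    iteratedDerivWithin_congr heqon (Set.Ioo_subset_Icc_self ht)
  have hid : ∀ j, j ≤ 2 * p → ∀ s ∈ Set.Icc a b,
      iteratedDerivWithin j (fun u => g u - Qf 0 u) (Set.Icc a b) s = F j s := by
    intro j
    induction j with
    | zero =>
      intro _ s hs
      have hG0 : G 0 = Qf 0 := by simpa using hGeven 0
      simp only [iteratedDerivWithin_zero, hFdef, hG0]
    | succ j ihj =>
      intro hj s hs
      rw [iteratedDerivWithin_succ]
      have hEq : Set.EqOn (iteratedDerivWithin j (fun u => g u - Qf 0 u) (Set.Icc a b))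
          (F j) (Set.Icc a b) := fun u hu => ihj (by omega) u hu
      rw [derivWithin_congr hEq (hEq hs)]
      exact (hFd j (by omega) s hs).derivWithin (huds s hs)
  have e3 := hid k hk t (Set.Ioo_subset_Icc_self ht)
  have hkey := key k hk t (Set.Ioo_subset_Icc_self ht)
  have hba' : b - a ≤ δ := by rw [hdhdef] at hδb; exact hδb
  calc |iteratedDerivWithin k (fun s => g s - Lg s) S t| = |F k t| := by rw [e1, e2, e3]
    _ ≤ 2 * M * (b - a) ^ (2 * p - k) := hkey
    _ ≤ 2 * M * δ ^ (2 * p - k) := by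
        have h1 : (b - a) ^ (2 * p - k) ≤ δ ^ (2 * p - k) :=
          pow_le_pow_left₀ (by linarith) hba' _
        have h2 : (0:ℝ) ≤ 2 * M := by linarith
        exact mul_le_mul_of_nonneg_left h1 h2
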